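/- Let F be a field of characteristic 2, let φ and ψ be nonsingular quadratic forms over F, and let c₁,…,c_s ∈ F be such that φ ⊥ ⟨c₁,…,c_s⟩ ≅ ψ ⊥ ⟨c₁,…,c_s⟩. Then for any nonsingular completion ρ of ⟨c₁,…,c_s⟩, there exists a nonsingular completion ρ' of ⟨c₁,…,c_s⟩ such that φ ⊥ ρ ≅ ψ ⊥ ρ'. -/

import Mathlib

open QuadraticMap MvPolynomial
open scoped TensorProduct

set_option synthInstance.maxHeartbeats 1000000
set_option maxHeartbeats 1000000


section Defs

variable {K : Type} [CommRing K]

/-- The binary quadratic form `[a,b] : (x,y) ↦ a·x² + x·y + b·y²`. -/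
noncomputable def binQF (a b : K) : QuadraticForm K (Fin 2 → K) :=
  (Matrix.of ![![a, 1], ![0, b]]).toQuadraticMap'

/-- The diagonal (totally singular) quadratic form `⟨c₁, …, c_s⟩`. -/
noncomputable def diagQF {s : ℕ} (c : Fin s → K) : QuadraticForm K (Fin s → K) :=
  QuadraticMap.weightedSumSquares K c

/-- The orthogonal sum `[a₁,b₁] ⊥ ⋯ ⊥ [a_r,b_r]` of binary forms. -/
noncomputable def binsQF {r : ℕ} (a b : Fin r → K) : QuadraticForm K (Fin r → Fin 2 → K) :=
  QuadraticMap.pi fun i => binQF (a i) (b i)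

/-- The orthogonal sum of `m` hyperbolic planes `[0,0]`. -/
noncomputable def hypQF (K : Type) [CommRing K] (m : ℕ) :
    QuadraticForm K (Fin m → Fin 2 → K) :=
  binsQF (fun _ => 0) (fun _ => 0)

/-- The `(n+1)`-fold quadratic Pfister form `⟨⟨a₁,…,aₙ⟩⟩_b ⊗ [1,c]`, i.e. the orthogonal
sum over all subsets `S ⊆ {1,…,n}` of `(∏_{i∈S} aᵢ)·[1,c]`. -/
noncomputable def pfisterQF (n : ℕ) (a : Fin n → K) (c : K) :
    QuadraticForm K (Finset (Fin n) → Fin 2 → K) :=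
  QuadraticMap.pi fun S : Finset (Fin n) => (∏ i ∈ S, a i) • binQF 1 c

variable {V W : Type} [AddCommGroup V] [Module K V] [AddCommGroup W] [Module K W]

/-- `φ` has type `(r,s)`: it is isometric to `[a₁,b₁] ⊥ ⋯ ⊥ [a_r,b_r] ⊥ ⟨c₁,…,c_s⟩`. -/
def HasTypeRS (φ : QuadraticForm K V) (r s : ℕ) : Prop :=
  ∃ (a b : Fin r → K) (c : Fin s → K), φ.Equivalent ((binsQF a b).prod (diagQF c))

/-- `φ` is dominated by `ψ`. -/
def Dominated (φ : QuadraticForm K V) (ψ : QuadraticForm K W) : Prop :=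
  ∃ f : V →ₗ[K] W, Function.Injective f ∧ ∀ v, φ v = ψ (f v)

/-- `φ` is weakly dominated by `ψ`: `α·φ` is dominated by `ψ` for some unit `α`. -/
def WeaklyDominated (φ : QuadraticForm K V) (ψ : QuadraticForm K W) : Prop :=
  ∃ α : Kˣ, Dominated ((α : K) • φ) ψ

/-- Witt equivalence of quadratic forms. -/
def WittEquiv (Q₁ : QuadraticForm K V) (Q₂ : QuadraticForm K W) : Prop :=
  ∃ k l : ℕ, (Q₁.prod (hypQF K k)).Equivalent (Q₂.prod (hypQF K l))

/-- `φ` is a Pfister neighbour: there is a quadratic Pfister form `π` with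
`2·dim φ > dim π` and `φ ≺_w π`. -/
def IsPfisterNeighbour (φ : QuadraticForm K V) : Prop :=
  ∃ (n : ℕ) (a : Fin n → Kˣ) (c : K),
    2 * Module.finrank K V > 2 ^ (n + 1) ∧
      WeaklyDominated φ (pfisterQF n (fun i => (a i : K)) c)

/-- The Artin–Schreier set `℘(K) = {t² + t : t ∈ K}`. -/
def ArtinSchreier (K : Type) [CommRing K] : Set K := {x : K | ∃ t : K, x = t ^ 2 + t}

end Defs

section FunField

variable (F : Type) [Field F]

/-- The coefficient matrix of a quadratic form on `Fin n → F` with respect to the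
standard basis: diagonal entries `ψ(eᵢ)`, above-diagonal entries `b_ψ(eᵢ,eⱼ)`. -/
noncomputable def coeffMat {n : ℕ} (ψ : QuadraticForm F (Fin n → F)) :
    Matrix (Fin n) (Fin n) F :=
  Matrix.of fun i j =>
    if i = j then ψ (Pi.single i 1)
    else if i < j then polar ψ (Pi.single i 1) (Pi.single j 1) else 0

/-- The homogeneous degree 2 polynomial `P_ψ` associated to a quadratic form `ψ`. -/
noncomputable def qfPoly {n : ℕ} (ψ : QuadraticForm F (Fin n → F)) :
    MvPolynomial (Fin n) F :=
  ∑ i : Fin n, ∑ j : Fin n, MvPolynomial.C (coeffMat F ψ i j) * (X i * X j)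

/-- The affine coordinate ring `F[x₁,…,xₙ]/(P_ψ)` of the quadric `ψ = 0`. -/
def FunFieldRing {n : ℕ} (ψ : QuadraticForm F (Fin n → F)) : Type :=
  MvPolynomial (Fin n) F ⧸ Ideal.span {qfPoly F ψ}

noncomputable instance {n : ℕ} (ψ : QuadraticForm F (Fin n → F)) :
    CommRing (FunFieldRing F ψ) :=
  inferInstanceAs (CommRing (MvPolynomial (Fin n) F ⧸ Ideal.span {qfPoly F ψ}))

noncomputable instance {n : ℕ} (ψ : QuadraticForm F (Fin n → F)) :
    Algebra F (FunFieldRing F ψ) :=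
  inferInstanceAs (Algebra F (MvPolynomial (Fin n) F ⧸ Ideal.span {qfPoly F ψ}))

/-- The function field `F(ψ)` of the quadric `ψ = 0`. -/
def FunField {n : ℕ} (ψ : QuadraticForm F (Fin n → F)) : Type :=
  FractionRing (FunFieldRing F ψ)

noncomputable instance {n : ℕ} (ψ : QuadraticForm F (Fin n → F)) :
    CommRing (FunField F ψ) :=
  inferInstanceAs (CommRing (FractionRing (FunFieldRing F ψ)))

noncomputable instance {n : ℕ} (ψ : QuadraticForm F (Fin n → F)) :
    Algebra (FunFieldRing F ψ) (FunField F ψ) :=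
  inferInstanceAs (Algebra (FunFieldRing F ψ) (FractionRing (FunFieldRing F ψ)))

noncomputable instance {n : ℕ} (ψ : QuadraticForm F (Fin n → F)) :
    Algebra F (FunField F ψ) :=
  inferInstanceAs (Algebra F (FractionRing (FunFieldRing F ψ)))

/-- The canonical map `F → F(ψ)`. -/
noncomputable def funFieldMap {n : ℕ} (ψ : QuadraticForm F (Fin n → F)) :
    F →+* FunField F ψ :=
  algebraMap F (FunField F ψ)

/-- Scalar extension of a quadratic form on `Fin n → F` along a ring homomorphism
`f : F → K`. -/
noncomputable def extendQF {K : Type} [CommRing K] (f : F →+* K) {n : ℕ}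
    (φ : QuadraticForm F (Fin n → F)) : QuadraticForm K (Fin n → K) :=
  ((coeffMat F φ).map f).toQuadraticMap'

end FunField


section Quat

variable (K : Type) [CommRing K]

/-- Defining relations for the char-2 quaternion algebra `[a,b)`: generators `i,j` with
`i² + i = a`, `j² = b`, `j·i = i·j + j` (i.e. `j·i·j⁻¹ = i + 1`). -/
inductive QuatRel (a b : K) : FreeAlgebra K (Fin 2) → FreeAlgebra K (Fin 2) → Prop
  | i_sq : QuatRel a b (FreeAlgebra.ι K 0 * FreeAlgebra.ι K 0 + FreeAlgebra.ι K 0)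
      (algebraMap K _ a)
  | j_sq : QuatRel a b (FreeAlgebra.ι K 1 * FreeAlgebra.ι K 1) (algebraMap K _ b)
  | swap : QuatRel a b (FreeAlgebra.ι K 1 * FreeAlgebra.ι K 0)
      (FreeAlgebra.ι K 0 * FreeAlgebra.ι K 1 + FreeAlgebra.ι K 1)

/-- The quaternion algebra `[a,b)` over `K` (characteristic two convention). -/
def QuatAlg (a b : K) : Type := RingQuot (QuatRel K a b)

noncomputable instance (a b : K) : Ring (QuatAlg K a b) :=
  inferInstanceAs (Ring (RingQuot (QuatRel K a b)))
noncomputable instance (a b : K) : Algebra K (QuatAlg K a b) :=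
  inferInstanceAs (Algebra K (RingQuot (QuatRel K a b)))

/-- `[a,b)` is split over `K`: isomorphic to the `2×2` matrix algebra. -/
def QuatSplit (a b : K) : Prop :=
  Nonempty (QuatAlg K a b ≃ₐ[K] Matrix (Fin 2) (Fin 2) K)

end Quat

section Sqrt

variable (F : Type) [Field F]

/-- The field `F(√c₁,…,√c_s)` obtained by adjoining square roots of the `cᵢ`
(inside an algebraic closure of `F`). -/
noncomputable def sqrtExt {s : ℕ} (c : Fin s → F) :
    IntermediateField F (AlgebraicClosure F) :=
  IntermediateField.adjoin F
    {y : AlgebraicClosure F | ∃ i, y ^ 2 = algebraMap F (AlgebraicClosure F) (c i)}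

/-- The subfield `F² = {x² : x ∈ F}` of squares of a field of characteristic 2. -/
noncomputable def sqSubfield : Subfield F := Subfield.closure (Set.range fun x : F => x ^ 2)

set_option synthInstance.maxHeartbeats 1000000 in
/-- The norm degree `[F²(cᵢ·cⱼ) : F²]` of a diagonal form `⟨c₁,…,c_s⟩`. -/
noncomputable def normDegree {s : ℕ} (c : Fin s → F) : ℕ :=
  Module.finrank (sqSubfield F)
    (IntermediateField.adjoin (sqSubfield F)
      (Set.range fun p : Fin s × Fin s => c p.1 * c p.2))

end Sqrt

/-- A ring is a division algebra if it is nontrivial and every nonzero element is a unit. -/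
def IsDivisionAlgebra (T : Type) [Ring T] : Prop :=
  (0 : T) ≠ 1 ∧ ∀ x : T, x ≠ 0 → IsUnit x


section Stmt14Aux
open QuadraticMap

variable {F : Type} [Field F]

private lemma binQF_apply'' (a b : F) (v : Fin 2 → F) :
    binQF a b v = a * v 0 * v 0 + v 0 * v 1 + b * v 1 * v 1 := by
  simp [binQF, Matrix.toQuadraticMap', Matrix.toQuadraticForm', Matrix.toLinearMap₂'_apply, Fin.sum_univ_two,
    LinearMap.BilinMap.toQuadraticMap_apply]
  ring

private lemma polar_sum_right' {M : Type} [AddCommGroup M] [Module F M]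
    (Q : QuadraticForm F M) {ι : Type} (t : Finset ι) (x : M) (f : ι → M) :
    polar Q x (∑ i ∈ t, f i) = ∑ i ∈ t, polar Q x (f i) := by
  simp_rw [← polarBilin_apply_apply]
  exact map_sum _ _ _

private lemma map_add_polar {M : Type} [AddCommGroup M] [Module F M]
    (Q : QuadraticForm F M) (x y : M) : Q (x + y) = Q x + Q y + polar Q x y := by
  rw [polar]; ring

variable [CharP F 2]

private lemma polar_binQF' (a b : F) (x y : Fin 2 → F) :
    polar (binQF a b) x y = x 0 * y 1 + x 1 * y 0 := by
  have h2 : (2:F) = 0 := CharTwo.two_eq_zero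
  simp only [polar, binQF_apply'', Pi.add_apply]
  linear_combination (a * x 0 * y 0 + b * x 1 * y 1) * h2

private lemma polar_pi' {ι : Type} [Fintype ι] {Mᵢ : ι → Type} [∀ i, AddCommGroup (Mᵢ i)]
    [∀ i, Module F (Mᵢ i)] (Q : ∀ i, QuadraticForm F (Mᵢ i)) (x y : ∀ i, Mᵢ i) :
    polar (QuadraticMap.pi Q) x y = ∑ i, polar (Q i) (x i) (y i) := by
  simp only [polar, pi_apply, Pi.add_apply, Finset.sum_sub_distrib]

private lemma polar_binsQF' {r : ℕ} (a b : Fin r → F) (x y : Fin r → Fin 2 → F) :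
    polar (binsQF a b) x y = ∑ i, (x i 0 * y i 1 + x i 1 * y i 0) := by
  rw [binsQF, polar_pi']
  exact Finset.sum_congr rfl fun i _ => polar_binQF' _ _ _ _

private lemma polar_prod' {M₁ M₂ : Type} [AddCommGroup M₁] [Module F M₁] [AddCommGroup M₂]
    [Module F M₂] (Q₁ : QuadraticForm F M₁) (Q₂ : QuadraticForm F M₂) (x y : M₁ × M₂) :
    polar (Q₁.prod Q₂) x y = polar Q₁ x.1 y.1 + polar Q₂ x.2 y.2 := by
  simp only [polar, QuadraticMap.prod_apply, Prod.fst_add, Prod.snd_add]; ring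

private lemma diagQF_apply' {s : ℕ} (c : Fin s → F) (x : Fin s → F) :
    diagQF c x = ∑ i, c i * (x i * x i) := by
  simp [diagQF, weightedSumSquares_apply, smul_eq_mul]

private lemma polar_diagQF' {s : ℕ} (c : Fin s → F) (x y : Fin s → F) :
    polar (diagQF c) x y = 0 := by
  have h2 : (2:F) = 0 := CharTwo.two_eq_zero
  simp only [polar, diagQF_apply', Pi.add_apply, ← Finset.sum_sub_distrib]
  rw [Finset.sum_eq_zero]; intro i _
  linear_combination (c i * x i * y i) * h2

private lemma polar_self_char2 {M : Type} [AddCommGroup M] [Module F M]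
    (Q : QuadraticForm F M) (x : M) : polar Q x x = 0 := by
  rw [polar_self, two_smul]
  exact CharTwo.add_self_eq_zero _

private lemma nondeg_of_sepLeft' {M : Type} [AddCommGroup M] [Module F M]
    (Q : QuadraticForm F M) (h : LinearMap.SeparatingLeft (polarBilin Q)) :
    LinearMap.BilinForm.Nondegenerate (polarBilin Q) :=
  ⟨h, fun y hy => h y fun x => by
    have := hy x
    rw [polarBilin_apply_apply] at this ⊢
    rwa [polar_comm]⟩

private lemma nondeg_binsQF {r : ℕ} (a b : Fin r → F) :
    LinearMap.BilinForm.Nondegenerate (polarBilin (binsQF a b)) := by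
  refine nondeg_of_sepLeft' _ ?_
  intro x hx
  have key : ∀ i : Fin r, x i 0 = 0 ∧ x i 1 = 0 := by
    intro i
    constructor
    · have := hx (Pi.single i ![0,1])
      rw [polarBilin_apply_apply, polar_binsQF'] at this
      simpa [Pi.single_apply, ite_apply, Matrix.cons_val_zero, Matrix.cons_val_one, Matrix.head_cons, mul_ite, Finset.sum_ite_eq'] using this
    · have := hx (Pi.single i ![1,0])
      rw [polarBilin_apply_apply, polar_binsQF'] at this
      simpa [Pi.single_apply, ite_apply, Matrix.cons_val_zero, Matrix.cons_val_one, Matrix.head_cons, mul_ite, Finset.sum_ite_eq'] using this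
  funext i k
  fin_cases k
  · exact (key i).1
  · exact (key i).2

private lemma nondeg_of_equivalent {M₁ M₂ : Type} [AddCommGroup M₁] [Module F M₁]
    [AddCommGroup M₂] [Module F M₂] {Q₁ : QuadraticForm F M₁} {Q₂ : QuadraticForm F M₂}
    (e : Q₁.IsometryEquiv Q₂) (h : LinearMap.BilinForm.Nondegenerate (polarBilin Q₂)) :
    LinearMap.BilinForm.Nondegenerate (polarBilin Q₁) := by
  refine nondeg_of_sepLeft' _ ?_
  intro x hx
  have key : ∀ u v : M₁, polar Q₂ (e u) (e v) = polar Q₁ u v := by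
    intro u v
    simp only [polar, ← map_add, e.map_app]
  have hex : (e x : M₂) = 0 := by
    apply h.1
    intro n
    have h1 := hx (e.symm n)
    rw [polarBilin_apply_apply] at h1
    rw [polarBilin_apply_apply, ← key x (e.symm n)] at *
    · rwa [show (e (e.symm n) : M₂) = n from e.toLinearEquiv.apply_symm_apply n] at h1
  have := congrArg e.symm.toLinearEquiv hex
  simpa using this

private lemma nondeg_prod {M₁ M₂ : Type} [AddCommGroup M₁] [Module F M₁] [AddCommGroup M₂]
    [Module F M₂] {Q₁ : QuadraticForm F M₁} {Q₂ : QuadraticForm F M₂}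
    (h₁ : LinearMap.BilinForm.Nondegenerate (polarBilin Q₁)) (h₂ : LinearMap.BilinForm.Nondegenerate (polarBilin Q₂)) :
    LinearMap.BilinForm.Nondegenerate (polarBilin (Q₁.prod Q₂)) := by
  refine nondeg_of_sepLeft' _ ?_
  intro x hx
  have e1 : x.1 = 0 := by
    apply h₁.1; intro n
    have := hx (n, 0)
    rw [polarBilin_apply_apply, polar_prod'] at this
    simpa [polar_zero_right] using this
  have e2 : x.2 = 0 := by
    apply h₂.1; intro n
    have := hx (0, n)
    rw [polarBilin_apply_apply, polar_prod'] at this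
    simpa [polar_zero_right] using this
  exact Prod.ext e1 e2

private lemma stmt14_exists_dual_vec {M : Type} [AddCommGroup M] [Module F M] [FiniteDimensional F M]
    (B : LinearMap.BilinForm F M) (hB : B.Nondegenerate) (hsymm : ∀ x y, B x y = B y x)
    {s : ℕ} {v : Fin s → M} (hv : LinearIndependent F v) (i₀ : Fin s) :
    ∃ f : M, ∀ j, B (v j) f = if j = i₀ then 1 else 0 := by
  obtain ⟨q, hq⟩ := (Submodule.span F (Set.range v)).exists_isCompl
  let bb : Module.Basis (Fin s) F (Submodule.span F (Set.range v)) := Module.Basis.span hv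
  let g : Module.Dual F M :=
    (bb.coord i₀).comp (Submodule.projectionOnto _ q hq)
  refine ⟨(B.toDual hB).symm g, fun j => ?_⟩
  rw [hsymm, LinearMap.BilinForm.apply_toDual_symm_apply]
  have hvj : v j ∈ Submodule.span F (Set.range v) := Submodule.subset_span ⟨j, rfl⟩
  have hproj : Submodule.projectionOnto _ q hq (v j) = ⟨v j, hvj⟩ :=
    Submodule.projectionOnto_apply_left hq ⟨v j, hvj⟩
  have hbj : bb j = ⟨v j, hvj⟩ := Module.Basis.span_apply hv j
  simp only [g, LinearMap.comp_apply, hproj, ← hbj, Module.Basis.coord_apply, Module.Basis.repr_self]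
  simp [Finsupp.single_apply]

set_option linter.unusedSectionVars false

private lemma polar_sum_left' {M : Type} [AddCommGroup M] [Module F M]
    (Q : QuadraticForm F M) {ι : Type} (t : Finset ι) (x : M) (g : ι → M) :
    polar (⇑Q) (∑ i ∈ t, g i) x = ∑ i ∈ t, polar (⇑Q) (g i) x := by
  rw [polar_comm, polar_sum_right']
  exact Finset.sum_congr rfl fun i _ => polar_comm _ _ _

private theorem stmt14_key {V W : Type} [AddCommGroup V] [Module F V] [AddCommGroup W] [Module F W]
    [FiniteDimensional F V] [FiniteDimensional F W]
    (Q : QuadraticForm F V) (ψ : QuadraticForm F W)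
    (hQnd : LinearMap.BilinForm.Nondegenerate (polarBilin Q))
    (hψnd : LinearMap.BilinForm.Nondegenerate (polarBilin ψ))
    {s : ℕ} (c : Fin s → F)
    (T : (W × (Fin s → F)) →ₗ[F] V) (hTinj : Function.Injective T)
    (hT : ∀ z, Q (T z) = (ψ.prod (diagQF c)) z)
    (hdim : Module.finrank F (W × (Fin s → Fin 2 → F)) = Module.finrank F V) :
    ∃ d' : Fin s → F, (ψ.prod (binsQF c d')).Equivalent Q := by
  classical
  set j : W →ₗ[F] V := T.comp (LinearMap.inl F W (Fin s → F)) with hjdef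
  set v : Fin s → V := fun i => T (0, Pi.single i 1) with hvdef
  have hj : ∀ w, j w = T (w, 0) := fun w => rfl
  have hv : ∀ i, v i = T (0, Pi.single i 1) := fun i => rfl
  have hpolarT : ∀ z z', polar Q (T z) (T z') = polar (ψ.prod (diagQF c)) z z' := by
    intro z z'; simp only [polar, ← map_add, hT]
  have hQj : ∀ w, Q (j w) = ψ w := by
    intro w
    rw [hj, hT, QuadraticMap.prod_apply, map_zero, add_zero]
  have hQv : ∀ i, Q (v i) = c i := by
    intro i
    rw [hv, hT, QuadraticMap.prod_apply, map_zero, zero_add, diagQF_apply']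
    simp [Pi.single_apply, Finset.sum_ite_eq']
  have hp_jj : ∀ w w', polar Q (j w) (j w') = polar ψ w w' := by
    intro w w'
    rw [hj, hj, hpolarT, polar_prod']
    simp [polar_diagQF']
  have hp_jv : ∀ w i, polar Q (j w) (v i) = 0 := by
    intro w i
    rw [hj, hv, hpolarT, polar_prod']
    simp [polar_diagQF', polar_zero_right]
  have hp_vv : ∀ i i', polar Q (v i) (v i') = 0 := by
    intro i i'
    rw [hv, hv, hpolarT, polar_prod']
    simp [polar_diagQF', polar_zero_left]
  have hjinj : Function.Injective j := by
    intro w w' hww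
    rw [hj, hj] at hww
    exact congrArg Prod.fst (hTinj hww)
  have hvind : LinearIndependent F v := by
    have h0 : LinearIndependent F (fun i : Fin s => Pi.single i (1:F)) := by
      have he : (fun i : Fin s => Pi.single i (1:F)) = ⇑(Pi.basisFun F (Fin s)) := by
        funext i; simp [Pi.basisFun_apply]
      rw [he]
      exact (Pi.basisFun F (Fin s)).linearIndependent
    have h1 := h0.map' (LinearMap.inr F W (Fin s → F))
      (LinearMap.ker_eq_bot.mpr LinearMap.inr_injective)
    have h2 := h1.map' T (LinearMap.ker_eq_bot.mpr hTinj)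
    have he2 : (⇑T ∘ (⇑(LinearMap.inr F W (Fin s → F)) ∘ fun i : Fin s => Pi.single i (1:F))) = v := by
      funext i; simp [hvdef]
    rwa [he2] at h2
  -- dual family
  have hsymmQ : ∀ x y : V, polarBilin Q x y = polarBilin Q y x := fun x y => polar_comm _ x y
  choose f' hf' using fun i₀ => stmt14_exists_dual_vec (polarBilin Q) hQnd hsymmQ hvind i₀
  have hf'p : ∀ i k, polar Q (v k) (f' i) = if k = i then 1 else 0 := by
    intro i k
    have := hf' i k
    rwa [polarBilin_apply_apply] at this
  -- orthogonalize against j(W)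
  obtain ⟨u, hudef⟩ : ∃ u : Fin s → W, ∀ i, u i = (LinearMap.BilinForm.toDual (polarBilin ψ)
      hψnd).symm (((polarBilin Q).flip (f' i)).comp j) := ⟨_, fun _ => rfl⟩
  have hu : ∀ i w, polar ψ (u i) w = polar Q (j w) (f' i) := by
    intro i w
    have h1 := LinearMap.BilinForm.apply_toDual_symm_apply (B := polarBilin ψ) (hB := hψnd)
      (((polarBilin Q).flip (f' i)).comp j) w
    simp only [LinearMap.comp_apply, LinearMap.flip_apply, polarBilin_apply_apply] at h1
    rw [hudef]
    exact h1
  obtain ⟨f'', hf''⟩ : ∃ f'' : Fin s → V, ∀ i, f'' i = f' i - j (u i) := ⟨_, fun _ => rfl⟩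
  have hp_jf'' : ∀ w i, polar Q (j w) (f'' i) = 0 := by
    intro w i
    rw [hf'', polar_sub_right, hp_jj, polar_comm (⇑ψ) w (u i), hu, sub_self]
  have hp_vf'' : ∀ k i, polar Q (v k) (f'' i) = if k = i then 1 else 0 := by
    intro k i
    rw [hf'', polar_sub_right, polar_comm (⇑Q) (v k) (j (u i)), hp_jv, sub_zero, hf'p]
  have hp_f''v : ∀ i k, polar Q (f'' i) (v k) = if k = i then 1 else 0 := by
    intro i k; rw [polar_comm]; exact hp_vf'' k i
  obtain ⟨t, ht⟩ : ∃ t : Fin s → Fin s → F, ∀ i k, t i k = polar Q (f'' i) (f'' k) :=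
    ⟨_, fun _ _ => rfl⟩
  have ht_symm : ∀ i k, t i k = t k i := by intro i k; rw [ht, ht]; exact polar_comm _ _ _
  have ht_self : ∀ i, t i i = 0 := by intro i; rw [ht]; exact polar_self_char2 Q (f'' i)
  obtain ⟨lam, hlam⟩ : ∃ lam : Fin s → Fin s → F,
      ∀ i k, lam i k = if i < k then t i k else 0 := ⟨_, fun _ _ => rfl⟩
  obtain ⟨f, hf⟩ : ∃ f : Fin s → V, ∀ i, f i = f'' i + ∑ k, lam i k • v k := ⟨_, fun _ => rfl⟩
  have hp_jf : ∀ w i, polar Q (j w) (f i) = 0 := by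
    intro w i
    rw [hf, polar_add_right, polar_sum_right']
    simp only [polar_smul_right, hp_jv, hp_jf'', smul_zero, Finset.sum_const_zero, add_zero]
  have hp_vf : ∀ k i, polar Q (v k) (f i) = if k = i then 1 else 0 := by
    intro k i
    rw [hf, polar_add_right, polar_sum_right', hp_vf'']
    simp only [polar_smul_right, hp_vv, smul_zero, Finset.sum_const_zero, add_zero]
  have hp_fv : ∀ i k, polar Q (f i) (v k) = if k = i then 1 else 0 := by
    intro i k; rw [polar_comm]; exact hp_vf k i
  have hp_f''f : ∀ i i', polar Q (f'' i) (f i') = t i i' + lam i' i := by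
    intro i i'
    rw [hf, polar_add_right, polar_sum_right', ← ht]
    congr 1
    simp only [polar_smul_right, hp_f''v, smul_eq_mul, mul_ite, mul_one, mul_zero]
    simp [Finset.sum_ite_eq']
  have hp_ff : ∀ i i', polar Q (f i) (f i') = 0 := by
    intro i i'
    have e1 : polar Q (f i) (f i') = t i i' + lam i' i + lam i i' := by
      conv_lhs => rw [hf i]
      rw [polar_add_left, polar_sum_left', hp_f''f]
      congr 1
      simp only [polar_smul_left, hp_vf, smul_eq_mul, mul_ite, mul_one, mul_zero]
      simp [Finset.sum_ite_eq']
    rw [e1, hlam i' i, hlam i i']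
    rcases lt_trichotomy i i' with hlt | heq | hgt
    · rw [if_neg (by omega : ¬ i' < i), if_pos hlt, add_zero]
      exact CharTwo.add_self_eq_zero _
    · subst heq
      simp [ht_self]
    · rw [if_pos hgt, if_neg (by omega : ¬ i < i'), add_zero, ht_symm i' i]
      exact CharTwo.add_self_eq_zero _
  -- the completion map
  set S : (Fin s → Fin 2 → F) →ₗ[F] V :=
    ∑ i : Fin s, ((LinearMap.toSpanSingleton F V (v i)).comp
        ((LinearMap.proj (0 : Fin 2)).comp (LinearMap.proj (R := F) (φ := fun _ : Fin s => Fin 2 → F) i))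
      + (LinearMap.toSpanSingleton F V (f i)).comp
        ((LinearMap.proj (1 : Fin 2)).comp (LinearMap.proj (R := F) (φ := fun _ : Fin s => Fin 2 → F) i)))
    with hSdef
  have hS : ∀ m, S m = ∑ i, (m i 0 • v i + m i 1 • f i) := by
    intro m
    rw [hSdef]
    simp [LinearMap.sum_apply, LinearMap.toSpanSingleton_apply]
  set L : (W × (Fin s → Fin 2 → F)) →ₗ[F] V := j.coprod S with hLdef
  have hL : ∀ w m, L (w, m) = j w + S m := fun w m => rfl
  have hp_jS : ∀ w m, polar Q (j w) (S m) = 0 := by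
    intro w m
    rw [hS, polar_sum_right']
    refine Finset.sum_eq_zero fun i _ => ?_
    rw [polar_add_right, polar_smul_right, polar_smul_right, hp_jv, hp_jf]
    simp
  have hQS : ∀ m, Q (S m) = binsQF c (fun i => Q (f i)) m := by
    intro m
    rw [hS, QuadraticMap.map_sum]
    have hzero : (∑ ij ∈ Finset.univ.sym2 with ¬ ij.IsDiag,
        polarSym2 Q (Sym2.map (fun i => m i 0 • v i + m i 1 • f i) ij)) = 0 := by
      refine Finset.sum_eq_zero fun ij hij => ?_
      revert hij
      refine Sym2.ind (fun i k hij => ?_) ij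
      obtain ⟨-, hij2⟩ := Finset.mem_filter.mp hij
      have hik : i ≠ k := by simpa [Sym2.isDiag_iff_proj_eq] using hij2
      rw [Sym2.map_mk, polarSym2_sym2Mk]
      simp only [polar_add_left, polar_add_right, polar_smul_left, polar_smul_right,
        hp_vv, hp_vf, hp_fv, hp_ff, smul_eq_mul, mul_zero, zero_add, add_zero]
      rw [if_neg (Ne.symm hik), if_neg hik]
      simp
    rw [hzero, add_zero, binsQF, QuadraticMap.pi_apply]
    refine Finset.sum_congr rfl fun i _ => ?_
    rw [map_add_polar, QuadraticMap.map_smul, QuadraticMap.map_smul, polar_smul_left,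
      polar_smul_right, hp_vf, hQv, binQF_apply'']
    simp only [smul_eq_mul, eq_self_iff_true, if_true, if_pos]
    ring
  have hQL : ∀ z : W × (Fin s → Fin 2 → F),
      Q (L z) = (ψ.prod (binsQF c (fun i => Q (f i)))) z := by
    rintro ⟨w, m⟩
    rw [hL, map_add_polar, hQj, hp_jS, add_zero, hQS, QuadraticMap.prod_apply]
  have hLker : ∀ z : W × (Fin s → Fin 2 → F), L z = 0 → z = 0 := by
    rintro ⟨w, m⟩ hz
    rw [hL] at hz
    have hm1 : ∀ i, m i 1 = 0 := by
      intro i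
      have h0 : polar Q (v i) (j w + S m) = 0 := by rw [hz, polar_zero_right]
      rw [polar_add_right, polar_comm (⇑Q) (v i) (j w), hp_jv, zero_add, hS,
        polar_sum_right'] at h0
      simpa [polar_add_right, polar_smul_right, hp_vv, hp_vf, Finset.sum_ite_eq'] using h0
    have hm0 : ∀ i, m i 0 = 0 := by
      intro i
      have h0 : polar Q (f i) (j w + S m) = 0 := by rw [hz, polar_zero_right]
      rw [polar_add_right, polar_comm (⇑Q) (f i) (j w), hp_jf, zero_add, hS,
        polar_sum_right'] at h0
      simpa [polar_add_right, polar_smul_right, hp_fv, hp_ff, Finset.sum_ite_eq'] using h0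
    have hm : m = 0 := by
      funext i k
      fin_cases k
      · exact hm0 i
      · exact hm1 i
    rw [hm, map_zero, add_zero] at hz
    have hw : w = 0 := hjinj (by rw [hz, map_zero])
    rw [hm, hw]
    rfl
  have hLinj : Function.Injective L :=
    LinearMap.ker_eq_bot.mp (LinearMap.ker_eq_bot'.mpr hLker)
  have hLsurj := (LinearMap.injective_iff_surjective_of_finrank_eq_finrank hdim).mp hLinj
  exact ⟨fun i => Q (f i), ⟨{ toLinearEquiv := LinearEquiv.ofBijective L ⟨hLinj, hLsurj⟩
                              map_app' := fun z => hQL z }⟩⟩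

end Stmt14Aux

theorem stmt14 (F : Type) [Field F] [CharP F 2]
    {V W : Type} [AddCommGroup V] [Module F V] [AddCommGroup W] [Module F W]
    (φ : QuadraticForm F V) (ψ : QuadraticForm F W)
    (hφns : ∃ (r : ℕ) (a b : Fin r → F), φ.Equivalent (binsQF a b))
    (hψns : ∃ (r : ℕ) (a b : Fin r → F), ψ.Equivalent (binsQF a b))
    (s : ℕ) (c : Fin s → F)
    (h : (φ.prod (diagQF c)).Equivalent (ψ.prod (diagQF c)))
    (d : Fin s → F) :
    ∃ d' : Fin s → F, (φ.prod (binsQF c d)).Equivalent (ψ.prod (binsQF c d')) := by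
  classical
  obtain ⟨rφ, aφ, bφ, ⟨eφ⟩⟩ := hφns
  obtain ⟨rψ, aψ, bψ, ⟨eψ⟩⟩ := hψns
  obtain ⟨g⟩ := h
  haveI : FiniteDimensional F V := Module.Finite.equiv eφ.toLinearEquiv.symm
  haveI : FiniteDimensional F W := Module.Finite.equiv eψ.toLinearEquiv.symm
  have hφnd := nondeg_of_equivalent eφ (nondeg_binsQF aφ bφ)
  have hψnd := nondeg_of_equivalent eψ (nondeg_binsQF aψ bψ)
  have hQnd : LinearMap.BilinForm.Nondegenerate (polarBilin (φ.prod (binsQF c d))) :=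
    nondeg_prod hφnd (nondeg_binsQF c d)
  set ιm : (Fin s → F) →ₗ[F] (Fin s → Fin 2 → F) :=
    LinearMap.pi fun i => (LinearMap.single F (fun _ : Fin 2 => F) 0).comp (LinearMap.proj i)
    with hιmdef
  have hιm0 : ∀ (x : Fin s → F) (i : Fin s), ιm x i 0 = x i := by
    intro x i; simp [hιmdef]
  have hιm1 : ∀ (x : Fin s → F) (i : Fin s), ιm x i 1 = 0 := by
    intro x i
    simp only [hιmdef, LinearMap.pi_apply, LinearMap.comp_apply, LinearMap.proj_apply]
    rw [LinearMap.single_apply]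
    exact Pi.single_eq_of_ne (by decide) _
  set T : (W × (Fin s → F)) →ₗ[F] (V × (Fin s → Fin 2 → F)) :=
    (LinearMap.id.prodMap ιm).comp g.symm.toLinearEquiv.toLinearMap with hTdef
  have hιminj : Function.Injective ιm := by
    intro x y hxy
    funext i
    have := congrFun (congrFun hxy i) 0
    rwa [hιm0, hιm0] at this
  have hTinj : Function.Injective T := by
    rw [hTdef, LinearMap.coe_comp]
    refine Function.Injective.comp ?_ g.symm.toLinearEquiv.injective
    rintro ⟨x1, x2⟩ ⟨y1, y2⟩ hxy
    simp only [LinearMap.prodMap_apply, LinearMap.id_coe, id_eq, Prod.mk.injEq] at hxy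
    exact Prod.ext hxy.1 (hιminj hxy.2)
  have hbins_ι : ∀ x, binsQF c d (ιm x) = diagQF c x := by
    intro x
    rw [binsQF, QuadraticMap.pi_apply, diagQF_apply']
    refine Finset.sum_congr rfl fun i _ => ?_
    rw [binQF_apply'', hιm0, hιm1]
    ring
  have hT : ∀ z, (φ.prod (binsQF c d)) (T z) = (ψ.prod (diagQF c)) z := by
    intro z
    have h1 : T z = ((g.symm z).1, ιm (g.symm z).2) := rfl
    rw [h1, QuadraticMap.prod_apply, hbins_ι]
    rw [show φ (g.symm z).1 + diagQF c (g.symm z).2 = (φ.prod (diagQF c)) (g.symm z) from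
      (QuadraticMap.prod_apply _ _ _).symm]
    exact g.symm.map_app z
  have hdim : Module.finrank F (W × (Fin s → Fin 2 → F)) =
      Module.finrank F (V × (Fin s → Fin 2 → F)) := by
    have h1 := LinearEquiv.finrank_eq g.toLinearEquiv
    rw [Module.finrank_prod, Module.finrank_prod] at h1
    rw [Module.finrank_prod, Module.finrank_prod]
    omega
  obtain ⟨d', hd'⟩ := stmt14_key (φ.prod (binsQF c d)) ψ hQnd hψnd c T hTinj hT hdim
  exact ⟨d', hd'.symm⟩
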